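/- Let Z ⊆ ℝⁿ be nonempty convex and h be 2ς-strongly convex and 2ζ-smooth on Z. Fix u ∈ Z, υ ≥ ζ, and let v = argmin_{z∈Z} { ∇h(u)ᵀ(z-u) + υ‖z-u‖² } and w = argmin_{z∈Z} h(z). Then ‖w - v‖² ≤ ((υ-ς)/(υ+ς)) ‖w - u‖². -/

import Mathlib

set_option maxHeartbeats 1000000

/-- If `a ≤ t * b` for all `t ∈ (0,1)`, then `a ≤ 0`. -/
lemma aux_limit (a b : ℝ) (H : ∀ t : ℝ, 0 < t → t < 1 → a ≤ t * b) : a ≤ 0 := by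
  by_contra hc
  push_neg at hc
  rcases le_or_gt b 0 with hb | hb
  · have := H (1/2) (by norm_num) (by norm_num)
    nlinarith
  · have ht1 : 0 < min (1/2) (a / (2*b)) := by
      apply lt_min (by norm_num)
      positivity
    have ht2 : min (1/2) (a / (2*b)) < 1 :=
      lt_of_le_of_lt (min_le_left _ _) (by norm_num)
    have := H _ ht1 ht2
    have h2 : min (1/2) (a / (2*b)) * b ≤ (a / (2*b)) * b :=
      mul_le_mul_of_nonneg_right (min_le_right _ _) hb.le
    have h3 : (a / (2*b)) * b = a / 2 := by field_simp
    linarith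

theorem one_step_contraction (n : ℕ) (Z : Set (EuclideanSpace ℝ (Fin n)))
    (hZne : Z.Nonempty) (hZ : Convex ℝ Z)
    (h : EuclideanSpace ℝ (Fin n) → ℝ)
    (gradh : EuclideanSpace ℝ (Fin n) → EuclideanSpace ℝ (Fin n))
    (ς ζ υ : ℝ) (hς : 0 < ς) (hζ : 0 < ζ) (hυ : ζ ≤ υ)
    (hstrong : ∀ x ∈ Z, ∀ y ∈ Z,
      h x + inner ℝ (gradh x) (y - x) + ς * ‖y - x‖ ^ 2 ≤ h y)
    (hsmooth : ∀ x ∈ Z, ∀ y ∈ Z,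
      h y ≤ h x + inner ℝ (gradh x) (y - x) + ζ * ‖y - x‖ ^ 2)
    (u : EuclideanSpace ℝ (Fin n)) (huZ : u ∈ Z)
    (v : EuclideanSpace ℝ (Fin n)) (hvZ : v ∈ Z)
    (hvmin : ∀ z ∈ Z,
      inner ℝ (gradh u) (v - u) + υ * ‖v - u‖ ^ 2 ≤
        inner ℝ (gradh u) (z - u) + υ * ‖z - u‖ ^ 2)
    (w : EuclideanSpace ℝ (Fin n)) (hwZ : w ∈ Z)
    (hwmin : ∀ z ∈ Z, h w ≤ h z) :
    ‖w - v‖ ^ 2 ≤ ((υ - ς) / (υ + ς)) * ‖w - u‖ ^ 2 := by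
  set g := gradh u with hg
  set A : ℝ := inner ℝ g (w - v) with hA
  set B : ℝ := inner ℝ (v - u) (w - v) with hB
  set c1 : ℝ := ‖w - v‖ ^ 2 with hc1
  set c2 : ℝ := ‖v - u‖ ^ 2 with hc2
  set c3 : ℝ := ‖w - u‖ ^ 2 with hc3
  have hc1nn : 0 ≤ c1 := by positivity
  have hc2nn : 0 ≤ c2 := by positivity
  have hc3nn : 0 ≤ c3 := by positivity
  -- the norm expansion identity
  have hwu : w - u = (w - v) + (v - u) := by abel
  have hident : c3 = c1 + 2 * B + c2 := by
    rw [hc3, hwu, norm_add_sq_real]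
    rw [hB, real_inner_comm]
  -- Step 1: variational inequality for v : 0 ≤ A + 2υB
  have hvi : 0 ≤ A + 2 * υ * B := by
    have key : -(A + 2 * υ * B) ≤ 0 := by
      apply aux_limit _ (υ * c1)
      intro t ht0 ht1
      set z := v + t • (w - v) with hz
      have hzZ : z ∈ Z := by
        have : z = (1 - t) • v + t • w := by
          rw [hz]; module
        rw [this]
        exact hZ hvZ hwZ (by linarith) ht0.le (by ring)
      have hmin := hvmin z hzZ
      have hzu : z - u = (v - u) + t • (w - v) := by rw [hz]; abel
      have hnorm : ‖z - u‖ ^ 2 = c2 + 2 * (t * B) + t ^ 2 * c1 := by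
        rw [hzu, norm_add_sq_real, inner_smul_right, norm_smul]
        simp only [hc2, hc1, hB, mul_pow, Real.norm_eq_abs, sq_abs]
      have hinner : (inner ℝ g (z - u) : ℝ) = inner ℝ g (v - u) + t * A := by
        rw [hzu, inner_add_right, inner_smul_right, hA]
      rw [hnorm, hinner] at hmin
      have h2 : 0 ≤ t * ((A + 2 * υ * B) + t * (υ * c1)) := by nlinarith
      have h3 : (0:ℝ) ≤ (A + 2 * υ * B) + t * (υ * c1) := by
        have := (mul_le_mul_iff_right₀ ht0).mp (by linarith : t * 0 ≤ t * ((A + 2 * υ * B) + t * (υ * c1)))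
        linarith
      linarith
    linarith
  -- Step 2: strengthened optimality of w : h w + ς * c1 ≤ h v
  have hsc : h w + ς * c1 ≤ h v := by
    have key : (ς * c1 - (h v - h w)) ≤ 0 := by
      apply aux_limit _ (ς * c1)
      intro t ht0 ht1
      set z := w + t • (v - w) with hz
      have hzZ : z ∈ Z := by
        have : z = (1 - t) • w + t • v := by rw [hz]; module
        rw [this]
        exact hZ hwZ hvZ (by linarith) ht0.le (by ring)
      set I : ℝ := inner ℝ (gradh z) (v - w) with hI
      have hwz : w - z = (-t) • (v - w) := by rw [hz]; module
      have hvz : v - z = (1 - t) • (v - w) := by rw [hz]; module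
      have hvw : ‖v - w‖ ^ 2 = c1 := by rw [hc1, norm_sub_rev]
      have e1 := hstrong z hzZ w hwZ
      have e2 := hstrong z hzZ v hvZ
      rw [hwz, inner_smul_right, norm_smul] at e1
      rw [hvz, inner_smul_right, norm_smul] at e2
      simp only [mul_pow, norm_neg, Real.norm_eq_abs] at e1 e2
      rw [sq_abs, hvw] at e1 e2
      have e3 := hwmin z hzZ
      have S : t * (h w + ς * ((1 - t) * c1)) ≤ t * (h v) := by
        have p1 := mul_le_mul_of_nonneg_left e1 (by linarith : (0:ℝ) ≤ 1 - t)
        have p2 := mul_le_mul_of_nonneg_left e2 ht0.le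
        nlinarith [p1, p2, e3]
      have S2 : h w + ς * ((1 - t) * c1) ≤ h v := (mul_le_mul_iff_right₀ ht0).mp S
      nlinarith [S2]
    linarith
  -- Step 3: combine with strong convexity and smoothness at u
  have hBineq := hstrong u huZ w hwZ
  have hCineq := hsmooth u huZ v hvZ
  have hginner : (inner ℝ g (w - u) : ℝ) = A + inner ℝ g (v - u) := by
    rw [hwu, inner_add_right, hA]
  rw [hginner] at hBineq
  rw [← hc3] at hBineq
  rw [← hc2] at hCineq
  -- A ≤ ζ c2 - ς c1 - ς c3
  have hAle : A ≤ ζ * c2 - ς * c1 - ς * c3 := by linarith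
  -- (υ+ς) c1 ≤ (υ-ς) c3 + (ζ-υ) c2 ≤ (υ-ς) c3
  have h2B : υ * (2 * B) = υ * (c3 - c1 - c2) := by
    rw [show (2:ℝ) * B = c3 - c1 - c2 from by linarith]
  have hmul : ζ * c2 ≤ υ * c2 := mul_le_mul_of_nonneg_right hυ hc2nn
  have hfinal : (υ + ς) * c1 ≤ (υ - ς) * c3 := by nlinarith [hvi, hAle, h2B, hmul]
  rw [div_mul_eq_mul_div, le_div_iff₀ (by linarith : (0:ℝ) < υ + ς)]
  linarith [hfinal]
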